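/- There exist a state ψ and a bounded linear functional φ on the C*-algebra B(ℂ²) of 2×2 matrices such that φ is absolutely continuous with respect to ψ, but the adjoint functional φ† (defined by φ†(t) = conjugate of φ(t*)) is not absolutely continuous with respect to ψ† = ψ. -/

import Mathlib

open ComplexOrder Filter Topology

section AbsValue

variable (M : Type*) [NormedRing M] [StarRing M] [NormedAlgebra ℂ M]

/-- `absΦ` is the absolute value (from the polar decomposition) of the weak-*
continuous functional `Φ` on the von Neumann algebra `M`, with partial isometry `v`:
`Φ = absΦ(· v)`, `absΦ` is positive, and `M(1 - v*v) = {ξ | absΦ(ξ*ξ) = 0}`. -/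
def IsAbsValue (Φ absΦ : M →L[ℂ] ℂ) (v : M) : Prop :=
  v * star v * v = v ∧
  (∀ ξ : M, 0 ≤ absΦ (star ξ * ξ)) ∧
  (∀ ξ : M, Φ ξ = absΦ (ξ * v)) ∧
  (∀ ξ : M, absΦ (star ξ * ξ) = 0 ↔ ξ * (star v * v) = 0)

end AbsValue

section Setup

variable (T M : Type*) [NormedRing T] [StarRing T] [NormedAlgebra ℂ T]
  [NormedRing M] [StarRing M] [NormedAlgebra ℂ M]

/-- Abstract model of the canonical inclusion `ι` of a unital C*-algebra `T` into its
bidual von Neumann algebra `M = T**`, together with the weak-* continuous extension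
`hat φ` of each bounded functional `φ` on `T`, and the polar decomposition data
(`absVal φ = |φ|`, with partial isometry `pIso φ`). -/
structure BidualSetup where
  ι : T →L[ℂ] M
  ι_mul : ∀ s t : T, ι (s * t) = ι s * ι t
  ι_star : ∀ t : T, ι (star t) = star (ι t)
  ι_one : ι 1 = 1
  ι_isom : ∀ t : T, ‖ι t‖ = ‖t‖
  hat : (T →L[ℂ] ℂ) →ₗ[ℂ] (M →L[ℂ] ℂ)
  hat_ext : ∀ (φ : T →L[ℂ] ℂ) (t : T), hat φ (ι t) = φ t
  hat_norm : ∀ φ : T →L[ℂ] ℂ, ‖hat φ‖ = ‖φ‖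
  absVal : (T →L[ℂ] ℂ) → (M →L[ℂ] ℂ)
  pIso : (T →L[ℂ] ℂ) → M
  polar : ∀ φ : T →L[ℂ] ℂ, IsAbsValue M (hat φ) (absVal φ) (pIso φ)

end Setup

section AC

variable {T M : Type*} [NormedRing T] [StarRing T] [NormedAlgebra ℂ T]
  [NormedRing M] [StarRing M] [NormedAlgebra ℂ M]

/-- `φ` is absolutely continuous with respect to `ψ`:
`|ψ|(ξ*ξ) = 0` implies `|φ|(ξ*ξ) = 0` for all `ξ ∈ T**`. -/
def AbsCont (B : BidualSetup T M) (φ ψ : T →L[ℂ] ℂ) : Prop :=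
  ∀ ξ : M, B.absVal ψ (star ξ * ξ) = 0 → B.absVal φ (star ξ * ξ) = 0

/-- The support projection `s_φ = v_φ* v_φ` of a functional `φ` on `T`. -/
def suppProj (B : BidualSetup T M) (φ : T →L[ℂ] ℂ) : M :=
  star (B.pIso φ) * B.pIso φ

/-- A state on a unital C*-algebra: a positive unital functional. -/
def IsStateOn (δ : T →L[ℂ] ℂ) : Prop :=
  (∀ t : T, 0 ≤ δ (star t * t)) ∧ δ 1 = 1

end AC


noncomputable section Helpers

local notation "H2" => EuclideanSpace ℂ (Fin 2)

/-- the functional `t ↦ ⟪x, t y⟫` on `B(ℂ²)`. -/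
def fA (x y : H2) : (H2 →L[ℂ] H2) →L[ℂ] ℂ :=
  (innerSL ℂ x).comp (ContinuousLinearMap.apply ℂ H2 y)

lemma fA_apply (x y : H2) (t : H2 →L[ℂ] H2) : fA x y t = inner ℂ x (t y) := rfl

/-- rank-one operator `z ↦ ⟪y,z⟫ • x`. -/
def rk (x y : H2) : H2 →L[ℂ] H2 := (innerSL ℂ y).smulRight x

lemma rk_apply (x y z : H2) : rk x y z = (inner ℂ y z : ℂ) • x := rfl

lemma star_rk (x y : H2) : star (rk x y) = rk y x := by
  rw [ContinuousLinearMap.star_eq_adjoint]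
  symm
  rw [ContinuousLinearMap.eq_adjoint_iff]
  intro a b
  simp [rk_apply, inner_smul_left, inner_smul_right, mul_comm]

lemma rk_mul_rk (x y x' y' : H2) :
    rk x y * rk x' y' = (inner ℂ y x' : ℂ) • rk x y' := by
  ext z
  simp [ContinuousLinearMap.mul_apply, rk_apply, smul_smul]
  ring_nf
  simp

lemma mul_rk (t : H2 →L[ℂ] H2) (x y : H2) : t * rk x y = rk (t x) y := by
  ext z
  simp [ContinuousLinearMap.mul_apply, rk_apply]

lemma fA_star_mul (x : H2) (ξ : H2 →L[ℂ] H2) :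
    fA x x (star ξ * ξ) = (‖ξ x‖ ^ 2 : ℝ) := by
  rw [fA_apply, ContinuousLinearMap.mul_apply, ContinuousLinearMap.star_eq_adjoint,
    ContinuousLinearMap.adjoint_inner_right, inner_self_eq_norm_sq_to_K]
  norm_cast

lemma isAbsValue_fA (x y : H2) (hx : (inner ℂ x x : ℂ) = 1) (hy : (inner ℂ y y : ℂ) = 1) :
    IsAbsValue (H2 →L[ℂ] H2) (fA x y) (fA x x) (rk y x) := by
  refine ⟨?_, ?_, ?_, ?_⟩
  · rw [star_rk, rk_mul_rk, hx, one_smul, rk_mul_rk, hy, one_smul]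
  · intro ξ
    rw [fA_star_mul]
    norm_cast
    positivity
  · intro ξ
    rw [fA_apply, fA_apply, mul_rk, rk_apply, hx, one_smul]
  · intro ξ
    rw [fA_star_mul, star_rk, rk_mul_rk, hy, one_smul, mul_rk]
    constructor
    · intro h
      have hx0 : ξ x = 0 := by
        have h' : (‖ξ x‖ : ℝ) ^ 2 = 0 := by exact_mod_cast h
        simpa using sq_eq_zero_iff.1 h'
      ext z; simp [rk_apply, hx0]
    · intro h
      have hx0 : ξ x = 0 := by
        have := congrFun (congrArg DFunLike.coe h) x
        have hx' : x ≠ 0 := by rintro rfl; simp at hx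
        simpa [rk_apply, hx, hx'] using this
      rw [hx0]
      simp

lemma inner_single_single (i j : Fin 2) :
    (inner ℂ (EuclideanSpace.single i (1:ℂ)) (EuclideanSpace.single j (1:ℂ)) : ℂ)
      = if i = j then 1 else 0 := by
  simp [EuclideanSpace.inner_single_left, EuclideanSpace.single_apply, eq_comm]

end Helpers

/-- on the C*-algebra `B(ℂ²)` (which is its own bidual, so
functionals coincide with their weak-* continuous extensions) there exist a state `ψ`
and a bounded functional `φ` such that `φ ≪ ψ` but the adjoint functional
`φ†(t) = conj (φ (t*))` is *not* absolutely continuous with respect to `ψ† = ψ`. -/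
theorem stmt5 :
    ∃ (ψ φ φd absφ absψ absφd :
        (EuclideanSpace ℂ (Fin 2) →L[ℂ] EuclideanSpace ℂ (Fin 2)) →L[ℂ] ℂ)
      (v w u : EuclideanSpace ℂ (Fin 2) →L[ℂ] EuclideanSpace ℂ (Fin 2)),
      -- ψ is a state
      (∀ t, 0 ≤ ψ (star t * t)) ∧ ψ 1 = 1 ∧
      -- ψ is self-adjoint, i.e. ψ† = ψ
      (∀ t, ψ t = starRingEnd ℂ (ψ (star t))) ∧
      -- φd is the adjoint functional φ†
      (∀ t, φd t = starRingEnd ℂ (φ (star t))) ∧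
      -- polar decompositions of φ, ψ, φ†
      IsAbsValue _ φ absφ v ∧ IsAbsValue _ ψ absψ w ∧ IsAbsValue _ φd absφd u ∧
      -- φ ≪ ψ
      (∀ ξ, absψ (star ξ * ξ) = 0 → absφ (star ξ * ξ) = 0) ∧
      -- but not φ† ≪ ψ
      ¬(∀ ξ, absψ (star ξ * ξ) = 0 → absφd (star ξ * ξ) = 0) := by
  classical
  set e0 : EuclideanSpace ℂ (Fin 2) := EuclideanSpace.single 0 1 with he0
  set e1 : EuclideanSpace ℂ (Fin 2) := EuclideanSpace.single 1 1 with he1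
  have h00 : (inner ℂ e0 e0 : ℂ) = 1 := by simp [he0, inner_single_single]
  have h11 : (inner ℂ e1 e1 : ℂ) = 1 := by simp [he1, inner_single_single]
  have h10 : (inner ℂ e1 e0 : ℂ) = 0 := by simp [he0, he1, inner_single_single]
  refine ⟨fA e0 e0, fA e0 e1, fA e1 e0, fA e0 e0, fA e0 e0, fA e1 e1,
    rk e1 e0, rk e0 e0, rk e0 e1, ?_, ?_, ?_, ?_, ?_, ?_, ?_, ?_, ?_⟩
  · intro t
    rw [fA_star_mul]
    norm_cast
    positivity
  · rw [fA_apply]; simpa using h00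
  · intro t
    rw [fA_apply, fA_apply, ContinuousLinearMap.star_eq_adjoint,
      ContinuousLinearMap.adjoint_inner_right, inner_conj_symm]
  · intro t
    rw [fA_apply, fA_apply, ContinuousLinearMap.star_eq_adjoint,
      ContinuousLinearMap.adjoint_inner_right, inner_conj_symm]
  · exact isAbsValue_fA e0 e1 h00 h11
  · exact isAbsValue_fA e0 e0 h00 h00
  · exact isAbsValue_fA e1 e0 h11 h00
  · exact fun ξ h => h
  · intro h
    have h2 : (fA e0 e0) (star (rk e1 e1) * rk e1 e1) = 0 := by
      rw [fA_star_mul, rk_apply, h10, zero_smul]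
      simp
    have h1 := h (rk e1 e1) h2
    rw [fA_star_mul, rk_apply, h11, one_smul] at h1
    have hn : ‖e1‖ = 1 := by
      simp [he1, EuclideanSpace.norm_single]
    rw [hn] at h1
    norm_num at h1
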